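/- If all the lifetimes T^{(l)}_j are mutually independent and for each type k they have common distribution function F_k (F̄_k := 1 − F_k), then for all times 0 ≤ s ≤ τ and all count vectors l ≤ m (componentwise) with 0 ≤ m_k ≤ n_k and 0 ≤ l_k ≤ m_k: P( T > s, T ≤ τ, and for every k: C_k(s) = m_k and C_k(τ) = l_k ) = [ Φ(m_1,…,m_L) − Φ(l_1,…,l_L) ] · ∏_{k=1}^L C(n_k, m_k) C(m_k, l_k) · F̄_k(τ)^{l_k} · (F̄_k(s) − F̄_k(τ))^{m_k−l_k} · F_k(s)^{n_k−m_k}. -/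

import Mathlib

open MeasureTheory Finset ProbabilityTheory


lemma count_down {L : ℕ} {n : Fin L → ℕ} (a : (k : Fin L) → Fin (n k) → Bool) (l : Fin L → ℕ) :
    (Finset.univ.filter fun b : (k : Fin L) → Fin (n k) → Bool =>
        (∀ k j, b k j = true → a k j = true) ∧
        ∀ k, (Finset.univ.filter fun j => b k j = true).card = l k).card
      = ∏ k, ((Finset.univ.filter fun j => a k j = true).card).choose (l k) := by
  have : ∏ k, ((Finset.univ.filter fun j => a k j = true).card).choose (l k)
      = (Finset.univ.pi fun k => (Finset.univ.filter fun j => a k j = true).powersetCard (l k)).card := by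
    rw [Finset.card_pi]
    exact Finset.prod_congr rfl fun k _ => (Finset.card_powersetCard _ _).symm
  rw [this]
  apply Finset.card_bij' (fun b _ => fun k _ => Finset.univ.filter fun j => b k j = true)
    (fun g _ => fun k j => decide (j ∈ g k (Finset.mem_univ k)))
  · intro b _
    funext k j
    by_cases h : b k j <;> simp [h]
  · intro g _
    funext k hk
    ext j
    simp
  · intro b hb
    simp only [Finset.mem_filter, Finset.mem_univ, true_and] at hb
    rw [Finset.mem_pi]
    intro k _
    rw [Finset.mem_powersetCard]
    refine ⟨fun j hj => ?_, hb.2 k⟩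
    rw [Finset.mem_filter] at hj ⊢
    exact ⟨hj.1, hb.1 k j hj.2⟩
  · intro g hg
    rw [Finset.mem_pi] at hg
    simp only [Finset.mem_filter, Finset.mem_univ, true_and]
    constructor
    · intro k j hj
      have := hg k (Finset.mem_univ k)
      rw [Finset.mem_powersetCard] at this
      have h2 := this.1 (by simpa using hj)
      simpa using h2
    · intro k
      have := hg k (Finset.mem_univ k)
      rw [Finset.mem_powersetCard] at this
      rw [← this.2]
      congr 1
      ext j
      simp

lemma count_up {L : ℕ} {n : Fin L → ℕ} (b : (k : Fin L) → Fin (n k) → Bool)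
    (l m : Fin L → ℕ) (hl : ∀ k, (Finset.univ.filter fun j => b k j = true).card = l k)
    (hlm : ∀ k, l k ≤ m k) :
    (Finset.univ.filter fun a : (k : Fin L) → Fin (n k) → Bool =>
        (∀ k j, b k j = true → a k j = true) ∧
        ∀ k, (Finset.univ.filter fun j => a k j = true).card = m k).card
      = ∏ k, (n k - l k).choose (m k - l k) := by
  have : ∏ k, (n k - l k).choose (m k - l k)
      = (Finset.univ.pi fun k =>
          ((Finset.univ.filter fun j => b k j = true)ᶜ).powersetCard (m k - l k)).card := by
    rw [Finset.card_pi]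
    refine Finset.prod_congr rfl fun k _ => ?_
    rw [Finset.card_powersetCard, Finset.card_compl, hl k, Fintype.card_fin]
  rw [this]
  apply Finset.card_bij' (fun a _ => fun k _ =>
      (Finset.univ.filter fun j => a k j = true) \ (Finset.univ.filter fun j => b k j = true))
    (fun g _ => fun k j => b k j || decide (j ∈ g k (Finset.mem_univ k)))
  · intro a ha
    simp only [Finset.mem_filter, Finset.mem_univ, true_and] at ha
    rw [Finset.mem_pi]
    intro k _
    rw [Finset.mem_powersetCard]
    have hsub : (Finset.univ.filter fun j => b k j = true)
        ⊆ (Finset.univ.filter fun j => a k j = true) := by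
      intro j hj
      rw [Finset.mem_filter] at hj ⊢
      exact ⟨hj.1, ha.1 k j hj.2⟩
    constructor
    · intro j hj
      rw [Finset.mem_sdiff] at hj
      rw [Finset.mem_compl]
      exact hj.2
    · rw [Finset.card_sdiff_of_subset hsub, ha.2 k, hl k]
  · intro g hg
    rw [Finset.mem_pi] at hg
    simp only [Finset.mem_filter, Finset.mem_univ, true_and]
    constructor
    · intro k j hj
      simp [hj]
    · intro k
      have hmem := Finset.mem_powersetCard.1 (hg k (Finset.mem_univ k))
      have hdisj : Disjoint (Finset.univ.filter fun j => b k j = true) (g k (Finset.mem_univ k)) := by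
        refine Finset.disjoint_left.2 fun j hj hj2 => ?_
        have := hmem.1 hj2
        rw [Finset.mem_compl] at this
        exact this hj
      have : (Finset.univ.filter fun j => (b k j || decide (j ∈ g k (Finset.mem_univ k))) = true)
          = (Finset.univ.filter fun j => b k j = true) ∪ g k (Finset.mem_univ k) := by
        ext j
        simp [Finset.mem_union, Finset.mem_filter]
      rw [this, Finset.card_union_of_disjoint hdisj, hl k, hmem.2]
      exact Nat.add_sub_cancel' (hlm k)
  · intro a ha
    simp only [Finset.mem_filter, Finset.mem_univ, true_and] at ha
    funext k j
    by_cases hbj : b k j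
    · simp [hbj, ha.1 k j hbj]
    · by_cases haj : a k j <;> simp [Finset.mem_sdiff, Finset.mem_filter, hbj, haj]
  · intro g hg
    rw [Finset.mem_pi] at hg
    funext k hk
    have hsub := (Finset.mem_powersetCard.1 (hg k (Finset.mem_univ k))).1
    ext j
    simp only [Finset.mem_sdiff, Finset.mem_filter, Finset.mem_univ, true_and,
      Bool.or_eq_true, decide_eq_true_eq]
    constructor
    · rintro ⟨hj | hj, hb2⟩
      · exact absurd hj hb2
      · exact hj
    · intro hj
      have := hsub hj
      rw [Finset.mem_compl, Finset.mem_filter] at this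
      exact ⟨Or.inr hj, fun hb2 => this ⟨Finset.mem_univ j, hb2⟩⟩

open MeasureTheory

/-- value table for single-component probabilities -/
noncomputable def qval (Fs Fτ : ℝ) : Bool → Bool → ℝ
  | true, true => 1 - Fτ
  | true, false => (1 - Fs) - (1 - Fτ)
  | false, true => 0
  | false, false => Fs

lemma mB {c : ℝ} (d : Bool) : MeasurableSet {x : ℝ | decide (c < x) = d} := by
  cases d
  · have : {x : ℝ | decide (c < x) = false} = Set.Iic c := by
      ext x; simp [not_lt]
    rw [this]; exact measurableSet_Iic
  · have : {x : ℝ | decide (c < x) = true} = Set.Ioi c := by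
      ext x; simp
    rw [this]; exact measurableSet_Ioi

lemma mB2 {s τ : ℝ} (a b : Bool) :
    MeasurableSet {x : ℝ | decide (s < x) = a ∧ decide (τ < x) = b} := by
  have : {x : ℝ | decide (s < x) = a ∧ decide (τ < x) = b}
      = {x : ℝ | decide (s < x) = a} ∩ {x : ℝ | decide (τ < x) = b} := rfl
  rw [this]; exact (mB a).inter (mB b)

lemma comp_prob {Ω : Type*} [MeasurableSpace Ω] (P : Measure Ω) [IsProbabilityMeasure P]
    (X : Ω → ℝ) (hX : Measurable X) (s τ : ℝ) (hsτ : s ≤ τ) (Fs Fτ : ℝ)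
    (hFs : (P {ω | X ω ≤ s}).toReal = Fs) (hFτ : (P {ω | X ω ≤ τ}).toReal = Fτ)
    (a b : Bool) :
    (P {ω | decide (s < X ω) = a ∧ decide (τ < X ω) = b}).toReal = qval Fs Fτ a b := by
  have hms : MeasurableSet {ω | X ω ≤ s} := hX measurableSet_Iic
  have hmτ : MeasurableSet {ω | X ω ≤ τ} := hX measurableSet_Iic
  cases a <;> cases b
  · -- false false : {X ≤ s}
    have : {ω | decide (s < X ω) = false ∧ decide (τ < X ω) = false} = {ω | X ω ≤ s} := by
      ext ω
      simp only [Set.mem_setOf_eq, decide_eq_false_iff_not, not_lt]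
      exact and_iff_left_of_imp fun h => h.trans hsτ
    rw [this, hFs]; rfl
  · -- false true : empty
    have : {ω | decide (s < X ω) = false ∧ decide (τ < X ω) = true} = (∅ : Set Ω) := by
      ext ω
      simp only [Set.mem_setOf_eq, decide_eq_false_iff_not, not_lt, decide_eq_true_eq,
        Set.mem_empty_iff_false, iff_false, not_and, not_lt]
      exact fun h1 => h1.trans hsτ
    rw [this, measure_empty]; rfl
  · -- true false : {X ≤ τ} \ {X ≤ s}
    have hset : {ω | X ω ≤ s} ∪ {ω | decide (s < X ω) = true ∧ decide (τ < X ω) = false}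
        = {ω | X ω ≤ τ} := by
      ext ω; simp only [Set.mem_union, Set.mem_setOf_eq, decide_eq_true_eq,
        decide_eq_false_iff_not, not_lt]
      constructor
      · rintro (h | h)
        · exact h.trans hsτ
        · exact h.2
      · intro h
        rcases le_or_gt (X ω) s with h2 | h2
        · exact Or.inl h2
        · exact Or.inr ⟨h2, h⟩
    have hdisj : Disjoint {ω | X ω ≤ s}
        {ω | decide (s < X ω) = true ∧ decide (τ < X ω) = false} := by
      rw [Set.disjoint_left]
      intro ω h1 h2
      simp only [Set.mem_setOf_eq, decide_eq_true_eq] at h1 h2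
      exact absurd h2.1 (not_lt.2 h1)
    have hmeas2 : MeasurableSet {ω | decide (s < X ω) = true ∧ decide (τ < X ω) = false} :=
      hX (mB2 true false)
    have hadd := measure_union (μ := P) hdisj hmeas2
    rw [hset] at hadd
    have h1 := congrArg ENNReal.toReal hadd
    rw [ENNReal.toReal_add (measure_ne_top P _) (measure_ne_top P _), hFs, hFτ] at h1
    show _ = (1 - Fs) - (1 - Fτ)
    linarith
  · -- true true : {X ≤ τ}ᶜ
    have hset : {ω | decide (s < X ω) = true ∧ decide (τ < X ω) = true}
        = {ω | X ω ≤ τ}ᶜ := by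
      ext ω; simp only [Set.mem_setOf_eq, decide_eq_true_eq, Set.mem_compl_iff, not_le]
      exact ⟨fun h => h.2, fun h => ⟨lt_of_le_of_lt hsτ h, h⟩⟩
    rw [hset]
    have hcompl := measure_compl hmτ (measure_ne_top P _)
    rw [measure_univ] at hcompl
    rw [hcompl, ENNReal.toReal_sub_of_le (prob_le_one) (by simp), ENNReal.toReal_one, hFτ]
    rfl

lemma prod_qval {N : ℕ} (Fs Fτ : ℝ) (a b : Fin N → Bool) (lk mk : ℕ)
    (ha : (Finset.univ.filter fun j => a j = true).card = mk)
    (hb : (Finset.univ.filter fun j => b j = true).card = lk)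
    (hle : ∀ j, b j = true → a j = true) :
    ∏ j, qval Fs Fτ (a j) (b j)
      = (1 - Fτ) ^ lk * ((1 - Fs) - (1 - Fτ)) ^ (mk - lk) * Fs ^ (N - mk) := by
  rw [← Finset.prod_filter_mul_prod_filter_not Finset.univ (fun j => a j = true)]
  have h2 : ∏ j ∈ Finset.univ.filter (fun j => ¬ a j = true), qval Fs Fτ (a j) (b j)
      = Fs ^ (N - mk) := by
    rw [Finset.prod_congr rfl (fun j hj => ?_), Finset.prod_const]
    · congr 1
      have := Finset.card_filter_add_card_filter_not
        (s := (Finset.univ : Finset (Fin N))) (p := fun j => a j = true)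
      simp only [Finset.card_univ, Fintype.card_fin] at this
      omega
    · rw [Finset.mem_filter] at hj
      have haj : a j = false := by
        cases h : a j
        · rfl
        · exact absurd h hj.2
      have hbj : b j = false := by
        cases h : b j
        · rfl
        · exact absurd (hle j h) hj.2
      rw [haj, hbj]; rfl
  have hsplit : (Finset.univ.filter fun j => a j = true)
      = ((Finset.univ.filter fun j => a j = true).filter fun j => b j = true)
        ∪ ((Finset.univ.filter fun j => a j = true).filter fun j => ¬ b j = true) :=
    (Finset.filter_union_filter_not_eq _ _).symm
  have hbsub : ((Finset.univ.filter fun j => a j = true).filter fun j => b j = true)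
      = Finset.univ.filter fun j => b j = true := by
    ext j
    simp only [Finset.mem_filter, Finset.mem_univ, true_and]
    exact ⟨fun h => h.2, fun h => ⟨hle j h, h⟩⟩
  have h1 : ∏ j ∈ Finset.univ.filter (fun j => a j = true), qval Fs Fτ (a j) (b j)
      = (1 - Fτ) ^ lk * ((1 - Fs) - (1 - Fτ)) ^ (mk - lk) := by
    rw [← Finset.prod_filter_mul_prod_filter_not
      (Finset.univ.filter fun j => a j = true) (fun j => b j = true)]
    congr 1
    · rw [Finset.prod_congr rfl (fun j hj => ?_), Finset.prod_const]
      · rw [hbsub, hb]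
      · rw [Finset.mem_filter, Finset.mem_filter] at hj
        rw [hj.1.2, hj.2]; rfl
    · rw [Finset.prod_congr rfl (fun j hj => ?_), Finset.prod_const]
      · congr 1
        have := Finset.card_filter_add_card_filter_not
          (s := Finset.univ.filter fun j => a j = true) (p := fun j => b j = true)
        rw [hbsub, hb, ha] at this
        omega
      · rw [Finset.mem_filter, Finset.mem_filter] at hj
        have hbj : b j = false := by
          cases h : b j
          · rfl
          · exact absurd h hj.2
        rw [hj.1.2, hbj]; rfl
  rw [h1, h2]

noncomputable def survSig {L : ℕ} (n : Fin L → ℕ)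
    (φ : ((l : Fin L) → Fin (n l) → Bool) → Bool) (c : Fin L → ℕ) : ℝ :=
  (∑ x : (l : Fin L) → Fin (n l) → Bool,
      if (∀ l, (Finset.univ.filter fun j => x l j = true).card = c l) ∧ φ x = true
      then (1 : ℝ) else 0)
    / ∏ l, (Nat.choose (n l) (c l) : ℝ)

set_option maxHeartbeats 1000000 in
theorem stmt_17
    {Ω : Type*} [MeasurableSpace Ω] (P : Measure Ω) [IsProbabilityMeasure P]
    {L : ℕ} (hL : 1 ≤ L) (n : Fin L → ℕ) (hn : ∀ k, 1 ≤ n k)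
    (T : (k : Fin L) → Fin (n k) → Ω → ℝ)
    (hTmeas : ∀ k j, Measurable (T k j))
    (hindep : iIndepFun
      (fun p : Σ k : Fin L, Fin (n k) => fun ω => T p.1 p.2 ω) P)
    (F : Fin L → ℝ → ℝ)
    (hF : ∀ k j x, (P {ω | T k j ω ≤ x}).toReal = F k x)
    (φ : ((k : Fin L) → Fin (n k) → Bool) → Bool) (hφ : Monotone φ)
    (Tsys : Ω → ℝ) (hTsys : Measurable Tsys)
    (hT : ∀ t : ℝ, 0 ≤ t →
      {ω | t < Tsys ω} = {ω | φ (fun k j => decide (t < T k j ω)) = true})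
    (s τ : ℝ) (hs : 0 ≤ s) (hsτ : s ≤ τ)
    (l m : Fin L → ℕ) (hlm : ∀ k, l k ≤ m k) (hm : ∀ k, m k ≤ n k) :
    (P {ω | s < Tsys ω ∧ Tsys ω ≤ τ
        ∧ ∀ k, (Finset.univ.filter fun j : Fin (n k) => s < T k j ω).card = m k
            ∧ (Finset.univ.filter fun j : Fin (n k) => τ < T k j ω).card = l k}).toReal
    = (survSig n φ m - survSig n φ l)
        * ∏ k, (Nat.choose (n k) (m k) : ℝ) * (Nat.choose (m k) (l k) : ℝ)
            * (1 - F k τ) ^ (l k)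
            * ((1 - F k s) - (1 - F k τ)) ^ (m k - l k)
            * F k s ^ (n k - m k) := by
  -- notation
  set E : Set Ω := {ω | s < Tsys ω ∧ Tsys ω ≤ τ
        ∧ ∀ k, (Finset.univ.filter fun j : Fin (n k) => s < T k j ω).card = m k
            ∧ (Finset.univ.filter fun j : Fin (n k) => τ < T k j ω).card = l k} with hEdef
  set Atom : (((k : Fin L) → Fin (n k) → Bool) × ((k : Fin L) → Fin (n k) → Bool)) → Set Ω :=
    fun ab => ⋂ p : Σ k : Fin L, Fin (n k),
      {ω | decide (s < T p.1 p.2 ω) = ab.1 p.1 p.2 ∧ decide (τ < T p.1 p.2 ω) = ab.2 p.1 p.2}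
    with hAtomdef
  set S : Finset (((k : Fin L) → Fin (n k) → Bool) × ((k : Fin L) → Fin (n k) → Bool)) :=
    Finset.univ.filter fun ab =>
      ((∀ k, (Finset.univ.filter fun j => ab.1 k j = true).card = m k)
        ∧ (∀ k, (Finset.univ.filter fun j => ab.2 k j = true).card = l k))
      ∧ φ ab.1 = true ∧ ¬ (φ ab.2 = true) with hSdef
  have hmemAtom : ∀ ab ω, ω ∈ Atom ab
      ↔ (∀ k j, decide (s < T k j ω) = ab.1 k j) ∧ (∀ k j, decide (τ < T k j ω) = ab.2 k j) := by
    intro ab ω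
    rw [hAtomdef]
    simp only [Set.mem_iInter, Set.mem_setOf_eq]
    exact ⟨fun h => ⟨fun k j => (h ⟨k, j⟩).1, fun k j => (h ⟨k, j⟩).2⟩,
      fun h p => ⟨h.1 p.1 p.2, h.2 p.1 p.2⟩⟩
  -- Step 1 : decomposition of the event
  have hE : E = ⋃ ab ∈ S, Atom ab := by
    ext ω
    simp only [Set.mem_iUnion, exists_prop]
    constructor
    · rintro ⟨h1, h2, h3⟩
      refine ⟨(fun k j => decide (s < T k j ω), fun k j => decide (τ < T k j ω)), ?_, ?_⟩
      · rw [hSdef, Finset.mem_filter]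
        refine ⟨Finset.mem_univ _, ⟨⟨fun k => ?_, fun k => ?_⟩, ?_, ?_⟩⟩
        · simp only [decide_eq_true_eq]
          exact (h3 k).1
        · simp only [decide_eq_true_eq]
          exact (h3 k).2
        · have hh := hT s hs
          rw [Set.ext_iff] at hh
          exact (hh ω).1 h1
        · intro hcontra
          have hh := hT τ (hs.trans hsτ)
          rw [Set.ext_iff] at hh
          exact absurd h2 (not_le.2 ((hh ω).2 hcontra))
      · exact (hmemAtom _ ω).2 ⟨fun k j => rfl, fun k j => rfl⟩
    · rintro ⟨ab, hab, hω⟩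
      rw [hSdef, Finset.mem_filter] at hab
      rw [hmemAtom] at hω
      have ha : (fun k j => decide (s < T k j ω)) = ab.1 :=
        funext fun k => funext fun j => hω.1 k j
      have hb : (fun k j => decide (τ < T k j ω)) = ab.2 :=
        funext fun k => funext fun j => hω.2 k j
      obtain ⟨-, ⟨hcm, hcl⟩, hφa, hφb⟩ := hab
      rw [← ha] at hcm hφa
      rw [← hb] at hcl hφb
      simp only [decide_eq_true_eq] at hcm hcl
      refine ⟨?_, ?_, fun k => ⟨hcm k, hcl k⟩⟩
      · have hh := hT s hs
        rw [Set.ext_iff] at hh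
        exact (hh ω).2 hφa
      · by_contra hcon
        push_neg at hcon
        have hh := hT τ (hs.trans hsτ)
        rw [Set.ext_iff] at hh
        exact hφb ((hh ω).1 hcon)
  -- Step 2 : atoms are measurable and pairwise disjoint
  have hAtomMeas : ∀ ab, MeasurableSet (Atom ab) := by
    intro ab
    exact MeasurableSet.iInter fun p => (hTmeas p.1 p.2) (mB2 _ _)
  have hPE : P E = ∑ ab ∈ S, P (Atom ab) := by
    rw [hE]
    refine measure_biUnion_finset ?_ (fun ab _ => hAtomMeas ab)
    intro ab _ ab' _ hne
    rw [Function.onFun, Set.disjoint_left]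
    intro ω hω hω'
    rw [hmemAtom] at hω hω'
    refine hne (Prod.ext ?_ ?_)
    · exact funext fun k => funext fun j => (hω.1 k j).symm.trans (hω'.1 k j)
    · exact funext fun k => funext fun j => (hω.2 k j).symm.trans (hω'.2 k j)
  -- Step 3 : independence on each atom
  have hAtomProd : ∀ ab, (P (Atom ab)).toReal
      = ∏ k, ∏ j, qval (F k s) (F k τ) (ab.1 k j) (ab.2 k j) := by
    intro ab
    have hprod := hindep.meas_iInter (s := fun p : Σ k : Fin L, Fin (n k) =>
        {ω | decide (s < T p.1 p.2 ω) = ab.1 p.1 p.2 ∧ decide (τ < T p.1 p.2 ω) = ab.2 p.1 p.2})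
      (fun p => ⟨{x : ℝ | decide (s < x) = ab.1 p.1 p.2 ∧ decide (τ < x) = ab.2 p.1 p.2},
        mB2 _ _, rfl⟩)
    rw [hAtomdef]
    rw [hprod, ENNReal.toReal_prod]
    have hterm : ∀ p : Σ k : Fin L, Fin (n k),
        (P {ω | decide (s < T p.1 p.2 ω) = ab.1 p.1 p.2
          ∧ decide (τ < T p.1 p.2 ω) = ab.2 p.1 p.2}).toReal
        = qval (F p.1 s) (F p.1 τ) (ab.1 p.1 p.2) (ab.2 p.1 p.2) :=
      fun p => comp_prob P (T p.1 p.2) (hTmeas p.1 p.2) s τ hsτ _ _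
        (hF p.1 p.2 s) (hF p.1 p.2 τ) _ _
    rw [Finset.prod_congr rfl (fun p _ => hterm p), ← Finset.univ_sigma_univ,
      Finset.prod_sigma]
  -- Step 4 : sum over S
  have hsum : (P E).toReal
      = ∑ ab ∈ S, ∏ k, ∏ j, qval (F k s) (F k τ) (ab.1 k j) (ab.2 k j) := by
    rw [hPE, ENNReal.toReal_sum (fun ab _ => measure_ne_top P _)]
    exact Finset.sum_congr rfl fun ab _ => hAtomProd ab
  -- Step 5 : evaluate the atom products
  set p0 : ℝ := ∏ k, (1 - F k τ) ^ (l k) * ((1 - F k s) - (1 - F k τ)) ^ (m k - l k)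
      * F k s ^ (n k - m k) with hp0def
  have hW : ∀ ab ∈ S, (∏ k, ∏ j, qval (F k s) (F k τ) (ab.1 k j) (ab.2 k j))
      = if (∀ k j, ab.2 k j = true → ab.1 k j = true) then p0 else 0 := by
    intro ab hab
    rw [hSdef, Finset.mem_filter] at hab
    obtain ⟨-, ⟨hcm, hcl⟩, -, -⟩ := hab
    by_cases hle : ∀ k j, ab.2 k j = true → ab.1 k j = true
    · rw [if_pos hle, hp0def]
      exact Finset.prod_congr rfl fun k _ =>
        prod_qval (F k s) (F k τ) (ab.1 k) (ab.2 k) (l k) (m k) (hcm k) (hcl k) (hle k)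
    · rw [if_neg hle]
      push_neg at hle
      obtain ⟨k, j, hbj, haj⟩ := hle
      refine Finset.prod_eq_zero (Finset.mem_univ k) ?_
      refine Finset.prod_eq_zero (Finset.mem_univ j) ?_
      have h1 : ab.1 k j = false := by
        cases h : ab.1 k j
        · rfl
        · exact absurd h haj
      rw [h1, hbj]; rfl
  have hkey : ∀ ab : ((k : Fin L) → Fin (n k) → Bool) × ((k : Fin L) → Fin (n k) → Bool),
      (∀ k j, ab.2 k j = true → ab.1 k j = true) → φ ab.2 = true → φ ab.1 = true := by
    intro ab hle hfb
    have h2 : ab.2 ≤ ab.1 := by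
      intro k j
      cases h : ab.2 k j
      · exact Bool.false_le _
      · rw [hle k j h]
    have h3 := hφ h2
    rw [hfb] at h3
    cases h : φ ab.1
    · rw [h] at h3; exact absurd h3 (by decide)
    · rfl
  have hsum2 : (P E).toReal = ∑ ab : ((k : Fin L) → Fin (n k) → Bool) × ((k : Fin L) → Fin (n k) → Bool),
      ((if ((∀ k j, ab.2 k j = true → ab.1 k j = true)
              ∧ ∀ k, (Finset.univ.filter fun j => ab.2 k j = true).card = l k)
            ∧ ((∀ k, (Finset.univ.filter fun j => ab.1 k j = true).card = m k) ∧ φ ab.1 = true)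
        then p0 else 0)
      - (if ((∀ k j, ab.2 k j = true → ab.1 k j = true)
              ∧ ∀ k, (Finset.univ.filter fun j => ab.1 k j = true).card = m k)
            ∧ ((∀ k, (Finset.univ.filter fun j => ab.2 k j = true).card = l k) ∧ φ ab.2 = true)
        then p0 else 0)) := by
    rw [hsum, Finset.sum_congr rfl hW, hSdef, Finset.sum_filter]
    refine Finset.sum_congr rfl fun ab _ => ?_
    have hk := hkey ab
    split_ifs <;> (try ring) <;> (exfalso; tauto)
  have hD1 : (∑ ab : ((k : Fin L) → Fin (n k) → Bool) × ((k : Fin L) → Fin (n k) → Bool),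
      if ((∀ k j, ab.2 k j = true → ab.1 k j = true)
              ∧ ∀ k, (Finset.univ.filter fun j => ab.2 k j = true).card = l k)
            ∧ ((∀ k, (Finset.univ.filter fun j => ab.1 k j = true).card = m k) ∧ φ ab.1 = true)
        then p0 else 0)
      = (∑ x : ((k : Fin L) → Fin (n k) → Bool), if (∀ k, (Finset.univ.filter fun j => x k j = true).card = m k)
            ∧ φ x = true then (1:ℝ) else 0)
        * ((∏ k, ((m k).choose (l k) : ℝ)) * p0) := by
    rw [Fintype.sum_prod_type]
    have inner : ∀ a : ((k : Fin L) → Fin (n k) → Bool),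
        (∑ b : ((k : Fin L) → Fin (n k) → Bool), if ((∀ k j, b k j = true → a k j = true)
              ∧ ∀ k, (Finset.univ.filter fun j => b k j = true).card = l k)
            ∧ ((∀ k, (Finset.univ.filter fun j => a k j = true).card = m k) ∧ φ a = true)
          then p0 else 0)
        = if (∀ k, (Finset.univ.filter fun j => a k j = true).card = m k) ∧ φ a = true
          then ((∏ k, ((m k).choose (l k) : ℝ)) * p0) else 0 := by
      intro a
      by_cases hA : (∀ k, (Finset.univ.filter fun j => a k j = true).card = m k) ∧ φ a = true
      · rw [if_pos hA]
        have : ∀ b : ((k : Fin L) → Fin (n k) → Bool), (((∀ k j, b k j = true → a k j = true)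
              ∧ ∀ k, (Finset.univ.filter fun j => b k j = true).card = l k)
            ∧ ((∀ k, (Finset.univ.filter fun j => a k j = true).card = m k) ∧ φ a = true))
            ↔ ((∀ k j, b k j = true → a k j = true)
              ∧ ∀ k, (Finset.univ.filter fun j => b k j = true).card = l k) :=
          fun b => and_iff_left hA
        rw [Finset.sum_congr rfl (fun b _ => by rw [if_congr (this b) rfl rfl]),
          ← Finset.sum_filter, Finset.sum_const, count_down a l, nsmul_eq_mul, Nat.cast_prod]
        congr 1
        exact Finset.prod_congr rfl fun k _ => by rw [hA.1 k]
      · rw [if_neg hA]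
        exact Finset.sum_eq_zero fun b _ => if_neg fun h => hA h.2
    rw [Finset.sum_congr rfl fun a _ => inner a, Finset.sum_mul]
    exact Finset.sum_congr rfl fun a _ => by split_ifs <;> ring
  have hD2 : (∑ ab : ((k : Fin L) → Fin (n k) → Bool) × ((k : Fin L) → Fin (n k) → Bool),
      if ((∀ k j, ab.2 k j = true → ab.1 k j = true)
              ∧ ∀ k, (Finset.univ.filter fun j => ab.1 k j = true).card = m k)
            ∧ ((∀ k, (Finset.univ.filter fun j => ab.2 k j = true).card = l k) ∧ φ ab.2 = true)
        then p0 else 0)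
      = (∑ x : ((k : Fin L) → Fin (n k) → Bool), if (∀ k, (Finset.univ.filter fun j => x k j = true).card = l k)
            ∧ φ x = true then (1:ℝ) else 0)
        * ((∏ k, ((n k - l k).choose (m k - l k) : ℝ)) * p0) := by
    rw [Fintype.sum_prod_type, Finset.sum_comm]
    have inner : ∀ b : ((k : Fin L) → Fin (n k) → Bool),
        (∑ a : ((k : Fin L) → Fin (n k) → Bool), if ((∀ k j, b k j = true → a k j = true)
              ∧ ∀ k, (Finset.univ.filter fun j => a k j = true).card = m k)
            ∧ ((∀ k, (Finset.univ.filter fun j => b k j = true).card = l k) ∧ φ b = true)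
          then p0 else 0)
        = if (∀ k, (Finset.univ.filter fun j => b k j = true).card = l k) ∧ φ b = true
          then ((∏ k, ((n k - l k).choose (m k - l k) : ℝ)) * p0) else 0 := by
      intro b
      by_cases hB : (∀ k, (Finset.univ.filter fun j => b k j = true).card = l k) ∧ φ b = true
      · rw [if_pos hB]
        have : ∀ a : ((k : Fin L) → Fin (n k) → Bool), (((∀ k j, b k j = true → a k j = true)
              ∧ ∀ k, (Finset.univ.filter fun j => a k j = true).card = m k)
            ∧ ((∀ k, (Finset.univ.filter fun j => b k j = true).card = l k) ∧ φ b = true))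
            ↔ ((∀ k j, b k j = true → a k j = true)
              ∧ ∀ k, (Finset.univ.filter fun j => a k j = true).card = m k) :=
          fun a => and_iff_left hB
        rw [Finset.sum_congr rfl (fun a _ => by rw [if_congr (this a) rfl rfl]),
          ← Finset.sum_filter, Finset.sum_const, count_up b l m hB.1 hlm, nsmul_eq_mul,
          Nat.cast_prod]
      · rw [if_neg hB]
        exact Finset.sum_eq_zero fun a _ => if_neg fun h => hB h.2
    rw [Finset.sum_congr rfl fun b _ => inner b, Finset.sum_mul]
    exact Finset.sum_congr rfl fun b _ => by split_ifs <;> ring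
  rw [hsum2, Finset.sum_sub_distrib, hD1, hD2]
  -- final algebra
  have hDm : (∏ k, ((n k).choose (m k) : ℝ)) ≠ 0 :=
    Finset.prod_ne_zero_iff.2 fun k _ => by
      exact_mod_cast (Nat.choose_pos (hm k)).ne'
  have hDl : (∏ k, ((n k).choose (l k) : ℝ)) ≠ 0 :=
    Finset.prod_ne_zero_iff.2 fun k _ => by
      exact_mod_cast (Nat.choose_pos ((hlm k).trans (hm k))).ne'
  have hid : (∏ k, ((n k).choose (m k) : ℝ)) * (∏ k, ((m k).choose (l k) : ℝ))
      = (∏ k, ((n k).choose (l k) : ℝ)) * (∏ k, ((n k - l k).choose (m k - l k) : ℝ)) := by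
    rw [← Finset.prod_mul_distrib, ← Finset.prod_mul_distrib]
    refine Finset.prod_congr rfl fun k _ => ?_
    rw [← Nat.cast_mul, ← Nat.cast_mul, Nat.choose_mul (hlm k)]
  have hsplit : (∏ k, ((n k).choose (m k) : ℝ) * ((m k).choose (l k) : ℝ)
            * (1 - F k τ) ^ (l k)
            * ((1 - F k s) - (1 - F k τ)) ^ (m k - l k)
            * F k s ^ (n k - m k))
      = (∏ k, ((n k).choose (m k) : ℝ)) * ((∏ k, ((m k).choose (l k) : ℝ)) * p0) := by
    rw [hp0def, ← Finset.prod_mul_distrib, ← Finset.prod_mul_distrib]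
    exact Finset.prod_congr rfl fun k _ => by ring
  rw [hsplit]
  have hSm : survSig n φ m = (∑ x : ((k : Fin L) → Fin (n k) → Bool),
      if (∀ k, (Finset.univ.filter fun j => x k j = true).card = m k) ∧ φ x = true
      then (1:ℝ) else 0) / ∏ k, ((n k).choose (m k) : ℝ) := rfl
  have hSl : survSig n φ l = (∑ x : ((k : Fin L) → Fin (n k) → Bool),
      if (∀ k, (Finset.univ.filter fun j => x k j = true).card = l k) ∧ φ x = true
      then (1:ℝ) else 0) / ∏ k, ((n k).choose (l k) : ℝ) := rfl
  rw [hSm, hSl]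
  have halg : ∀ A1 A2 Dm Dl Cml El q : ℝ, Dm ≠ 0 → Dl ≠ 0 → Dm * Cml = Dl * El →
      A1 * (Cml * q) - A2 * (El * q) = (A1 / Dm - A2 / Dl) * (Dm * (Cml * q)) := by
    intro A1 A2 Dm Dl Cml El q h1 h2 h3
    field_simp
    linear_combination A2 * q * h3
  exact halg _ _ _ _ _ _ _ hDm hDl hid
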